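/- For every positive integer m, there exists a positive integer n such that for every coloring of the vertex set {0,1}ⁿ ⊂ ℝⁿ of the n-dimensional unit hypercube with an arbitrary set of colors, there exist either two distinct points x, y ∈ {0,1}ⁿ at Euclidean distance √2 with χ(x) = χ(y), or a rainbow isometric copy of {0, √2}^m (the vertex set of an m-dimensional hypercube of sidelength √2) inside {0,1}ⁿ. -/

import Mathlib

open Finset symmDiff

/-- The vertex set `{0, s}^m ⊂ ℝ^m` of an `m`-dimensional hypercube of sidelength `s`. -/
def cubeVertices (m : ℕ) (s : ℝ) : Set (EuclideanSpace ℝ (Fin m)) :=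
  {x | ∀ i, x i = 0 ∨ x i = s}

namespace EdgeRainbowAux

variable {n m : ℕ}

/-- Flip a boolean vector on a set of coordinates. -/
def flipv (x : Fin n → Bool) (A : Finset (Fin n)) : Fin n → Bool :=
  fun j => xor (x j) (decide (j ∈ A))

lemma flipv_flipv (x : Fin n → Bool) (A B : Finset (Fin n)) :
    flipv (flipv x A) B = flipv x (A ∆ B) := by
  funext j
  simp only [flipv]
  by_cases hA : j ∈ A <;> by_cases hB : j ∈ B <;>
    simp [Finset.mem_symmDiff, hA, hB]

lemma flipv_cancel (x : Fin n → Bool) (A : Finset (Fin n)) :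
    flipv (flipv x A) A = x := by
  rw [flipv_flipv, symmDiff_self]
  funext j
  simp [flipv, Finset.bot_eq_empty]

/-- The set of coordinates where two boolean vectors differ. -/
def dset (a b : Fin n → Bool) : Finset (Fin n) := univ.filter fun j => a j ≠ b j

lemma dset_flipv (x : Fin n → Bool) (A B : Finset (Fin n)) :
    dset (flipv x A) (flipv x B) = A ∆ B := by
  ext j
  simp only [dset, mem_filter, mem_univ, true_and, flipv, Finset.mem_symmDiff]
  by_cases hA : j ∈ A <;> by_cases hB : j ∈ B <;> cases hx : x j <;> simp [hA, hB, hx]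

def padu (u : Fin m → Bool) (i : ℕ) : Bool := if h : i < m then u ⟨i, h⟩ else false

def Eset (n : ℕ) {m : ℕ} (u : Fin m → Bool) : Finset (Fin n) :=
  univ.filter fun j => (j : ℕ) < 2 * m ∧ padu u ((j : ℕ) / 2) = true

lemma mem_Eset {u : Fin m → Bool} {j : Fin n} :
    j ∈ Eset n u ↔ (j : ℕ) < 2 * m ∧ padu u ((j : ℕ) / 2) = true := by
  simp [Eset]

lemma padu_xor (s t : Fin m → Bool) (i : ℕ) :
    padu (fun i => xor (s i) (t i)) i = xor (padu s i) (padu t i) := by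
  unfold padu; split <;> simp

lemma Eset_symmDiff (s t : Fin m → Bool) :
    (Eset n s) ∆ (Eset n t) = Eset n (fun i => xor (s i) (t i)) := by
  ext j
  simp only [Finset.mem_symmDiff, mem_Eset, padu_xor]
  by_cases hj : (j : ℕ) < 2 * m <;>
    cases hs : padu s ((j : ℕ) / 2) <;> cases ht : padu t ((j : ℕ) / 2) <;>
      simp [hj, hs, ht]

lemma Eset_card (hm : 0 < m) (h2m : 2 * m ≤ n) (u : Fin m → Bool) :
    (Eset n u).card = 2 * (univ.filter fun i => u i = true).card := by
  have key : (Eset n u).card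
      = ((univ.filter fun i => u i = true) ×ˢ (univ : Finset Bool)).card := by
    refine Finset.card_nbij'
      (i := fun j => ((⟨(j : ℕ) / 2 % m, Nat.mod_lt _ hm⟩ : Fin m), decide ((j : ℕ) % 2 = 1)))
      (j := fun p => (⟨2 * (p.1 : ℕ) + (if p.2 then 1 else 0), by
        have := p.1.isLt; split <;> omega⟩ : Fin n))
      ?_ ?_ ?_ ?_
    · intro j hj
      obtain ⟨h1, h2⟩ := mem_Eset.1 hj
      have hdiv : (j : ℕ) / 2 < m := by omega
      rw [padu, dif_pos hdiv] at h2
      refine Finset.mem_product.2 ⟨Finset.mem_filter.2 ⟨mem_univ _, ?_⟩, mem_univ _⟩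
      have : ((j : ℕ) / 2 % m) = (j : ℕ) / 2 := Nat.mod_eq_of_lt hdiv
      simpa [this] using h2
    · rintro ⟨i, b⟩ hp
      have hi : u i = true := (Finset.mem_filter.1 (Finset.mem_product.1 hp).1).2
      have hilt := i.isLt
      have hval : (2 * (i : ℕ) + (if b then 1 else 0)) / 2 = (i : ℕ) := by
        split <;> omega
      refine mem_Eset.2 ⟨?_, ?_⟩
      · show (2 * (i : ℕ) + (if b then 1 else 0)) < 2 * m
        split <;> omega
      · show padu u ((2 * (i : ℕ) + (if b then 1 else 0)) / 2) = true
        rw [hval, padu, dif_pos i.isLt]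
        simpa using hi
    · intro j hj
      obtain ⟨h1, _⟩ := mem_Eset.1 hj
      have hdiv : (j : ℕ) / 2 < m := by omega
      apply Fin.ext
      have : ((j : ℕ) / 2 % m) = (j : ℕ) / 2 := Nat.mod_eq_of_lt hdiv
      by_cases h2 : (j : ℕ) % 2 = 1 <;> simp [this, h2] <;> omega
    · rintro ⟨i, b⟩ hp
      have hilt := i.isLt
      have hdiv : (2 * (i : ℕ) + (if b then 1 else 0)) / 2 = (i : ℕ) := by
        split <;> omega
      have hmod : ((2 * (i : ℕ) + (if b then 1 else 0)) / 2) % m = (i : ℕ) := by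
        rw [hdiv]; exact Nat.mod_eq_of_lt hilt
      refine Prod.ext ?_ ?_
      · apply Fin.ext
        show ((2 * (i : ℕ) + (if b then 1 else 0)) / 2) % m = (i : ℕ)
        exact hmod
      · show decide ((2 * (i : ℕ) + (if b then 1 else 0)) % 2 = 1) = b
        cases b <;> simp <;> omega
  rw [key, Finset.card_product, Finset.card_univ, Fintype.card_bool, mul_comm]

/-- Embed a boolean vector as a vertex of the unit cube in Euclidean space. -/
def toEuc (a : Fin n → Bool) : EuclideanSpace ℝ (Fin n) :=
  WithLp.toLp 2 (fun j => if a j then (1:ℝ) else 0)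

lemma dist_toEuc (a b : Fin n → Bool) :
    dist (toEuc a) (toEuc b) = Real.sqrt (#(dset a b)) := by
  rw [EuclideanSpace.dist_eq]
  congr 1
  rw [dset, Finset.card_filter]
  push_cast
  refine Finset.sum_congr rfl fun i _ => ?_
  by_cases h : a i = b i
  · simp [toEuc, h]
  · cases ha : a i <;> cases hb : b i <;> simp [ha, hb] at h ⊢ <;>
      simp [toEuc, ha, hb, Real.dist_eq, abs_of_nonneg]

lemma toEuc_mem (a : Fin n → Bool) : toEuc a ∈ cubeVertices n 1 := by
  intro i
  by_cases h : a i <;> simp [toEuc, h]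

lemma indep_bound {α : Type*} [DecidableEq α] (χ' : (Fin n → Bool) → α)
    (P : ∀ a b : Fin n → Bool, #(dset a b) = 2 → χ' a ≠ χ' b)
    (y : Fin n → Bool) (k : ℕ) (hk : 1 ≤ k) :
    #((Finset.powersetCard k (univ : Finset (Fin n))).filter
        fun F => χ' y = χ' (flipv y F)) * k ≤ n.choose (k - 1) := by
  set S := (Finset.powersetCard k (univ : Finset (Fin n))).filter
      (fun F => χ' y = χ' (flipv y F)) with hSdef
  have hcardk : ∀ F ∈ S, #F = k := fun F hF =>
    (Finset.mem_powersetCard.1 (Finset.mem_filter.1 hF).1).2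
  have hdisj : ∀ F ∈ S, ∀ F' ∈ S, F ≠ F' →
      Disjoint (Finset.powersetCard (k - 1) F) (Finset.powersetCard (k - 1) F') := by
    intro F hF F' hF' hne
    rw [Finset.disjoint_left]
    intro G hG hG'
    exfalso
    obtain ⟨hGF, hGc⟩ := Finset.mem_powersetCard.1 hG
    obtain ⟨hGF', _⟩ := Finset.mem_powersetCard.1 hG'
    have hFk := hcardk F hF
    have hF'k := hcardk F' hF'
    have hsub : G ⊆ F ∩ F' := Finset.subset_inter hGF hGF'
    have h1 : k - 1 ≤ #(F ∩ F') := hGc ▸ Finset.card_le_card hsub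
    have h3 : #(F ∩ F') ≤ k := hFk ▸ Finset.card_le_card Finset.inter_subset_left
    have h2 : #(F ∩ F') ≠ k := by
      intro h
      have : F ∩ F' = F := Finset.eq_of_subset_of_card_le Finset.inter_subset_left
        (by omega)
      have hsub2 : F ⊆ F' := by rw [← this]; exact Finset.inter_subset_right
      exact hne (Finset.eq_of_subset_of_card_le hsub2 (by omega))
    have hcard2 : #(F ∆ F') = 2 := by
      have hu := Finset.card_union_add_card_inter F F'
      have hΔ : F ∆ F' = (F ∪ F') \ (F ∩ F') := by
        rw [symmDiff_eq_sup_sdiff_inf]; rfl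
      rw [hΔ, Finset.card_sdiff_of_subset (Finset.inter_subset_union)]
      omega
    have := P (flipv y F) (flipv y F') (by rw [dset_flipv]; exact hcard2)
    exact this (((Finset.mem_filter.1 hF).2).symm.trans ((Finset.mem_filter.1 hF').2))
  have hcards : ∀ F ∈ S, #(Finset.powersetCard (k - 1) F) = k := by
    intro F hF
    rw [Finset.card_powersetCard, hcardk F hF]
    have h1 : k - (k - 1) = 1 := by omega
    rw [← Nat.choose_symm (by omega : k - 1 ≤ k), h1, Nat.choose_one_right]
  have hbu : #(S.biUnion fun F => Finset.powersetCard (k - 1) F) = #S * k := by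
    rw [Finset.card_biUnion hdisj, Finset.sum_congr rfl hcards, Finset.sum_const,
      smul_eq_mul]
  have hsub : (S.biUnion fun F => Finset.powersetCard (k - 1) F)
      ⊆ Finset.powersetCard (k - 1) univ := by
    intro G hG
    obtain ⟨F, _, hGF⟩ := Finset.mem_biUnion.1 hG
    exact Finset.mem_powersetCard.2
      ⟨Finset.subset_univ _, (Finset.mem_powersetCard.1 hGF).2⟩
  have hle := Finset.card_le_card hsub
  rwa [hbu, Finset.card_powersetCard, Finset.card_univ, Fintype.card_fin] at hle

/-- A permutation mapping `A` onto `B` (when they have the same size). -/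
noncomputable def tauP (A B : Finset (Fin n)) : Equiv.Perm (Fin n) :=
  if h : #A = #B then
    Equiv.subtypeCongr (Finset.equivOfCardEq h)
      ((Equiv.subtypeEquivRight (fun x => (Finset.mem_compl (s := A)).symm)).trans
        ((Finset.equivOfCardEq (by
            rw [Finset.card_compl, Finset.card_compl, h])).trans
          (Equiv.subtypeEquivRight (fun x => Finset.mem_compl (s := B)))))
  else 1

lemma image_tauP {A B : Finset (Fin n)} (h : #A = #B) :
    A.image (tauP A B) = B := by
  apply Finset.eq_of_subset_of_card_le
  · intro b hb
    obtain ⟨a, ha, rfl⟩ := Finset.mem_image.1 hb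
    rw [tauP, dif_pos h]
    have : Equiv.subtypeCongr (Finset.equivOfCardEq h)
        ((Equiv.subtypeEquivRight (fun x => (Finset.mem_compl (s := A)).symm)).trans
          ((Finset.equivOfCardEq (by rw [Finset.card_compl, Finset.card_compl, h])).trans
            (Equiv.subtypeEquivRight (fun x => Finset.mem_compl (s := B))))) a
        = ((Finset.equivOfCardEq h) ⟨a, ha⟩ : Fin n) := by
      simp [Equiv.subtypeCongr, ha]
    rw [this]
    exact Finset.coe_mem _
  · rw [Finset.card_image_of_injective _ (Equiv.injective _), h]

lemma fib_const {E F : Finset (Fin n)} (hEF : #E = #F) :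
    #(univ.filter fun π : Equiv.Perm (Fin n) => E.image π = F)
      = #(univ.filter fun π : Equiv.Perm (Fin n) => E.image π = E) := by
  have htau : F.image (tauP F E) = E := image_tauP hEF.symm
  have htauinv : E.image ⇑((tauP F E)⁻¹) = F := by
    have : (F.image (tauP F E)).image ⇑((tauP F E)⁻¹) = F := by
      rw [Finset.image_image]
      have : (⇑((tauP F E)⁻¹) ∘ ⇑(tauP F E)) = id := by
        funext z; simp
      rw [this, Finset.image_id]
    rwa [htau] at this
  refine Finset.card_nbij' (i := fun π => tauP F E * π) (j := fun π => (tauP F E)⁻¹ * π)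
    ?_ ?_ ?_ ?_
  · intro π hπ
    simp only [Finset.mem_coe, Finset.mem_filter, Finset.mem_univ, true_and] at hπ ⊢
    rw [show ⇑(tauP F E * π) = ⇑(tauP F E) ∘ ⇑π from rfl, ← Finset.image_image, hπ, htau]
  · intro σ hσ
    simp only [Finset.mem_coe, Finset.mem_filter, Finset.mem_univ, true_and] at hσ ⊢
    rw [show ⇑((tauP F E)⁻¹ * σ) = ⇑((tauP F E)⁻¹) ∘ ⇑σ from rfl, ← Finset.image_image, hσ,
      htauinv]
  · intro π _; simp [← mul_assoc]
  · intro π _; simp [← mul_assoc]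

lemma T_bound {α : Type*} [DecidableEq α] (hm : 0 < m) (h2m : 2 * m ≤ n)
    (χ' : (Fin n → Bool) → α)
    (P : ∀ a b : Fin n → Bool, #(dset a b) = 2 → χ' a ≠ χ' b)
    (u : Fin m → Bool) (hu : ∃ i, u i = true) :
    #(univ.filter fun ω : (Fin n → Bool) × Equiv.Perm (Fin n) =>
        χ' ω.1 = χ' (flipv ω.1 ((Eset n u).image ω.2))) * (n - 2 * m + 1)
      ≤ Fintype.card ((Fin n → Bool) × Equiv.Perm (Fin n)) := by
  set k := #(Eset n u) with hk
  have hkcard := Eset_card hm h2m u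
  have hfilpos : 0 < #(univ.filter fun i => u i = true) := by
    obtain ⟨i, hi⟩ := hu
    exact Finset.card_pos.2 ⟨i, Finset.mem_filter.2 ⟨mem_univ _, hi⟩⟩
  have hfille : #(univ.filter fun i => u i = true) ≤ m := by
    calc #(univ.filter fun i => u i = true) ≤ #(univ : Finset (Fin m)) :=
          Finset.card_le_card (Finset.filter_subset _ _)
      _ = m := by rw [Finset.card_univ, Fintype.card_fin]
  have hk1 : 1 ≤ k := by omega
  have hk2m : k ≤ 2 * m := by omega
  set fib0 := #(univ.filter fun π : Equiv.Perm (Fin n) => (Eset n u).image π = Eset n u)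
    with hfib0
  set SY : (Fin n → Bool) → ℕ := fun y =>
    #((Finset.powersetCard k (univ : Finset (Fin n))).filter
      fun F => χ' y = χ' (flipv y F)) with hSY
  have hPy : ∀ y : Fin n → Bool,
      #(univ.filter fun π : Equiv.Perm (Fin n) =>
          χ' y = χ' (flipv y ((Eset n u).image π))) = SY y * fib0 := by
    intro y
    have hmaps : ∀ π ∈ (univ.filter fun π : Equiv.Perm (Fin n) =>
        χ' y = χ' (flipv y ((Eset n u).image π))),
        (Eset n u).image ⇑π ∈ ((Finset.powersetCard k (univ : Finset (Fin n))).filter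
          fun F => χ' y = χ' (flipv y F)) := by
      intro π hπ
      refine Finset.mem_filter.2 ⟨Finset.mem_powersetCard.2 ⟨Finset.subset_univ _, ?_⟩, ?_⟩
      · rw [Finset.card_image_of_injective _ (Equiv.injective _)]
      · exact (Finset.mem_filter.1 hπ).2
    rw [Finset.card_eq_sum_card_fiberwise hmaps]
    have hinner : ∀ F ∈ ((Finset.powersetCard k (univ : Finset (Fin n))).filter
        fun F => χ' y = χ' (flipv y F)),
        #((univ.filter fun π : Equiv.Perm (Fin n) =>
            χ' y = χ' (flipv y ((Eset n u).image π))).filter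
          fun π : Equiv.Perm (Fin n) => (Eset n u).image ⇑π = F) = fib0 := by
      intro F hF
      have hFcond := (Finset.mem_filter.1 hF).2
      have hFcard : #F = k := (Finset.mem_powersetCard.1 (Finset.mem_filter.1 hF).1).2
      have heq : ((univ.filter fun π : Equiv.Perm (Fin n) =>
            χ' y = χ' (flipv y ((Eset n u).image π))).filter
          fun π : Equiv.Perm (Fin n) => (Eset n u).image ⇑π = F)
          = (univ.filter fun π : Equiv.Perm (Fin n) => (Eset n u).image ⇑π = F) := by
        ext π
        simp only [Finset.mem_filter, Finset.mem_univ, true_and]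
        constructor
        · rintro ⟨_, h⟩; exact h
        · intro h; exact ⟨by rw [h]; exact hFcond, h⟩
      rw [heq]
      exact fib_const (by rw [hFcard])
    rw [Finset.sum_congr rfl hinner, Finset.sum_const, smul_eq_mul]
  have hPerm : Fintype.card (Equiv.Perm (Fin n)) = n.choose k * fib0 := by
    have hmaps : ∀ π ∈ (univ : Finset (Equiv.Perm (Fin n))),
        (Eset n u).image ⇑π ∈ Finset.powersetCard k (univ : Finset (Fin n)) := by
      intro π _
      exact Finset.mem_powersetCard.2 ⟨Finset.subset_univ _,
        by rw [Finset.card_image_of_injective _ (Equiv.injective _)]⟩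
    rw [← Finset.card_univ, Finset.card_eq_sum_card_fiberwise hmaps]
    have hinner : ∀ F ∈ Finset.powersetCard k (univ : Finset (Fin n)),
        #((univ : Finset (Equiv.Perm (Fin n))).filter fun π : Equiv.Perm (Fin n) => (Eset n u).image ⇑π = F)
          = fib0 := by
      intro F hF
      exact fib_const (by rw [(Finset.mem_powersetCard.1 hF).2])
    rw [Finset.sum_congr rfl hinner, Finset.sum_const, smul_eq_mul,
      Finset.card_powersetCard, Finset.card_univ, Fintype.card_fin]
  have hybound : ∀ y : Fin n → Bool,
      #(univ.filter fun π : Equiv.Perm (Fin n) =>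
          χ' y = χ' (flipv y ((Eset n u).image π))) * (n - k + 1)
        ≤ Fintype.card (Equiv.Perm (Fin n)) := by
    intro y
    have h1 : SY y * k ≤ n.choose (k - 1) := indep_bound χ' P y k hk1
    have h2 : n.choose (k - 1) * (n - (k - 1)) = n.choose k * k := by
      have hch := Nat.choose_succ_right_eq n (k - 1)
      have hs : k - 1 + 1 = k := by omega
      rw [hs] at hch
      omega
    have hnk : n - (k - 1) = n - k + 1 := by
      have hkn : k ≤ n := le_trans hk2m h2m
      omega
    have h3 : SY y * (n - k + 1) * k ≤ n.choose k * k := by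
      calc SY y * (n - k + 1) * k = SY y * k * (n - k + 1) := by ring
        _ ≤ n.choose (k - 1) * (n - k + 1) := Nat.mul_le_mul_right _ h1
        _ = n.choose k * k := by rw [← hnk, h2]
    have h4 : SY y * (n - k + 1) ≤ n.choose k :=
      Nat.le_of_mul_le_mul_right h3 (by omega)
    rw [hPy y, hPerm]
    calc SY y * fib0 * (n - k + 1) = SY y * (n - k + 1) * fib0 := by ring
      _ ≤ n.choose k * fib0 := Nat.mul_le_mul_right _ h4
  -- sum over y
  have hmapsT : ∀ ω ∈ (univ.filter fun ω : (Fin n → Bool) × Equiv.Perm (Fin n) =>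
      χ' ω.1 = χ' (flipv ω.1 ((Eset n u).image ω.2))),
      ω.1 ∈ (univ : Finset (Fin n → Bool)) := fun _ _ => mem_univ _
  have hTsum : #(univ.filter fun ω : (Fin n → Bool) × Equiv.Perm (Fin n) =>
      χ' ω.1 = χ' (flipv ω.1 ((Eset n u).image ω.2)))
      = ∑ y : Fin n → Bool, #(univ.filter fun π : Equiv.Perm (Fin n) =>
          χ' y = χ' (flipv y ((Eset n u).image π))) := by
    rw [Finset.card_eq_sum_card_fiberwise hmapsT]
    refine Finset.sum_congr rfl fun y _ => ?_
    refine Finset.card_nbij' (i := Prod.snd) (j := fun π => (y, π)) ?_ ?_ ?_ ?_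
    · intro ω hω
      obtain ⟨hω1, hω2⟩ := Finset.mem_filter.1 hω
      obtain ⟨_, hcond⟩ := Finset.mem_filter.1 hω1
      refine Finset.mem_filter.2 ⟨mem_univ _, ?_⟩
      rw [← hω2]
      exact hcond
    · intro π hπ
      refine Finset.mem_filter.2 ⟨Finset.mem_filter.2 ⟨mem_univ _, ?_⟩, rfl⟩
      exact (Finset.mem_filter.1 hπ).2
    · intro ω hω
      have hω2 := (Finset.mem_filter.1 hω).2
      exact Prod.ext hω2.symm rfl
    · intro π _
      rfl
  have hfinal : #(univ.filter fun ω : (Fin n → Bool) × Equiv.Perm (Fin n) =>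
      χ' ω.1 = χ' (flipv ω.1 ((Eset n u).image ω.2))) * (n - k + 1)
      ≤ Fintype.card ((Fin n → Bool) × Equiv.Perm (Fin n)) := by
    rw [hTsum, Finset.sum_mul, Fintype.card_prod]
    calc (∑ y : Fin n → Bool, #(univ.filter fun π : Equiv.Perm (Fin n) =>
            χ' y = χ' (flipv y ((Eset n u).image π))) * (n - k + 1))
        ≤ ∑ _y : Fin n → Bool, Fintype.card (Equiv.Perm (Fin n)) :=
          Finset.sum_le_sum fun y _ => hybound y
      _ = Fintype.card (Fin n → Bool) * Fintype.card (Equiv.Perm (Fin n)) := by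
          rw [Finset.sum_const, smul_eq_mul, Finset.card_univ]
  calc #(univ.filter fun ω : (Fin n → Bool) × Equiv.Perm (Fin n) =>
      χ' ω.1 = χ' (flipv ω.1 ((Eset n u).image ω.2))) * (n - 2 * m + 1)
      ≤ #(univ.filter fun ω : (Fin n → Bool) × Equiv.Perm (Fin n) =>
          χ' ω.1 = χ' (flipv ω.1 ((Eset n u).image ω.2))) * (n - k + 1) :=
        Nat.mul_le_mul_left _ (by omega)
    _ ≤ _ := hfinal

lemma xor_xor_self (s t : Fin m → Bool) :
    (fun i => xor (s i) (xor (s i) (t i))) = t := by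
  funext i; cases s i <;> cases t i <;> rfl

lemma exists_good {α : Type*} [DecidableEq α] (hm : 0 < m) (hn : 2 * m + 4 ^ m ≤ n)
    (χ' : (Fin n → Bool) → α)
    (P : ∀ a b : Fin n → Bool, #(dset a b) = 2 → χ' a ≠ χ' b) :
    ∃ x : Fin n → Bool, ∃ π : Equiv.Perm (Fin n), ∀ s t : Fin m → Bool,
      χ' (flipv x ((Eset n s).image π)) = χ' (flipv x ((Eset n t).image π)) → s = t := by
  classical
  have h2m : 2 * m ≤ n := by
    have : 0 < 4 ^ m := pow_pos (by norm_num) m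
    omega
  set Bad : (Fin m → Bool) → (Fin m → Bool) →
      Finset ((Fin n → Bool) × Equiv.Perm (Fin n)) := fun s t =>
    univ.filter fun ω => χ' (flipv ω.1 ((Eset n s).image ω.2))
      = χ' (flipv ω.1 ((Eset n t).image ω.2)) with hBadDef
  have hBad : ∀ s t : Fin m → Bool, s ≠ t →
      #(Bad s t) * (n - 2 * m + 1)
        ≤ Fintype.card ((Fin n → Bool) × Equiv.Perm (Fin n)) := by
    intro s t hst
    set u : Fin m → Bool := fun i => xor (s i) (t i) with hu
    have huex : ∃ i, u i = true := by
      obtain ⟨i, hi⟩ := Function.ne_iff.1 hst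
      refine ⟨i, ?_⟩
      rw [hu]
      cases hsi : s i <;> cases hti : t i <;> simp_all
    have hEu : ∀ π : Equiv.Perm (Fin n),
        ((Eset n s).image ⇑π) ∆ ((Eset n u).image ⇑π) = (Eset n t).image ⇑π := by
      intro π
      rw [← Finset.image_symmDiff _ _ (Equiv.injective _), Eset_symmDiff]
      congr 1
      rw [hu]
      have := xor_xor_self s t
      simp only [this]
    have hcardeq : #(Bad s t) = #(univ.filter
        fun ω : (Fin n → Bool) × Equiv.Perm (Fin n) =>
          χ' ω.1 = χ' (flipv ω.1 ((Eset n u).image ω.2))) := by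
      refine Finset.card_nbij'
        (i := fun ω => (flipv ω.1 ((Eset n s).image ω.2), ω.2))
        (j := fun ω => (flipv ω.1 ((Eset n s).image ω.2), ω.2)) ?_ ?_ ?_ ?_
      · intro ω hω
        have hcond := (Finset.mem_filter.1 hω).2
        refine Finset.mem_filter.2 ⟨mem_univ _, ?_⟩
        show χ' (flipv ω.1 ((Eset n s).image ω.2))
          = χ' (flipv (flipv ω.1 ((Eset n s).image ω.2)) ((Eset n u).image ω.2))
        rw [flipv_flipv, hEu ω.2]
        exact hcond
      · intro ω hω
        have hcond := (Finset.mem_filter.1 hω).2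
        refine Finset.mem_filter.2 ⟨mem_univ _, ?_⟩
        show χ' (flipv (flipv ω.1 ((Eset n s).image ω.2)) ((Eset n s).image ω.2))
          = χ' (flipv (flipv ω.1 ((Eset n s).image ω.2)) ((Eset n t).image ω.2))
        rw [flipv_cancel, flipv_flipv, ← hEu ω.2, symmDiff_symmDiff_cancel_left]
        exact hcond
      · intro ω _
        simp only [flipv_cancel]
      · intro ω _
        simp only [flipv_cancel]
    rw [hcardeq]
    exact T_bound hm h2m χ' P u huex
  set bad : Finset ((Fin n → Bool) × Equiv.Perm (Fin n)) :=
    univ.filter fun ω => ¬ ∀ s t : Fin m → Bool,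
      χ' (flipv ω.1 ((Eset n s).image ω.2)) = χ' (flipv ω.1 ((Eset n t).image ω.2))
        → s = t with hbadDef
  have hsub : bad ⊆ ((univ : Finset (Fin m → Bool)).offDiag).biUnion
      fun p => Bad p.1 p.2 := by
    intro ω hω
    have h := (Finset.mem_filter.1 hω).2
    push_neg at h
    obtain ⟨s, t, heq, hne⟩ := h
    exact Finset.mem_biUnion.2 ⟨(s, t), Finset.mem_offDiag.2 ⟨mem_univ _, mem_univ _, hne⟩,
      Finset.mem_filter.2 ⟨mem_univ _, heq⟩⟩
  set K := n - 2 * m + 1 with hK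
  set NΩ := Fintype.card ((Fin n → Bool) × Equiv.Perm (Fin n)) with hNΩ
  have hKpos : 0 < K := by omega
  have hcard1 : #bad ≤ ∑ p ∈ (univ : Finset (Fin m → Bool)).offDiag, #(Bad p.1 p.2) :=
    le_trans (Finset.card_le_card hsub) Finset.card_biUnion_le
  have hbadK : #bad * K ≤ #((univ : Finset (Fin m → Bool)).offDiag) * NΩ := by
    calc #bad * K ≤ (∑ p ∈ (univ : Finset (Fin m → Bool)).offDiag, #(Bad p.1 p.2)) * K :=
          Nat.mul_le_mul_right _ hcard1
      _ = ∑ p ∈ (univ : Finset (Fin m → Bool)).offDiag, #(Bad p.1 p.2) * K :=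
          by rw [Finset.sum_mul]
      _ ≤ ∑ _p ∈ (univ : Finset (Fin m → Bool)).offDiag, NΩ :=
          Finset.sum_le_sum fun p hp => hBad p.1 p.2 (Finset.mem_offDiag.1 hp).2.2
      _ = #((univ : Finset (Fin m → Bool)).offDiag) * NΩ := by
          rw [Finset.sum_const, smul_eq_mul]
  have hcard2m : Fintype.card (Fin m → Bool) = 2 ^ m := by
    simp [Fintype.card_fun]
  have hoff : #((univ : Finset (Fin m → Bool)).offDiag) = 2 ^ m * 2 ^ m - 2 ^ m := by
    rw [Finset.offDiag_card, Finset.card_univ, hcard2m]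
  have h4 : (4 : ℕ) ^ m = 2 ^ m * 2 ^ m := by
    rw [show (4 : ℕ) = 2 * 2 by norm_num, mul_pow]
  have hofflt : #((univ : Finset (Fin m → Bool)).offDiag) < K := by
    rw [hoff, hK]
    omega
  have hNpos : 0 < NΩ := Fintype.card_pos
  have hbadlt : #bad < NΩ := by
    have h5 : #bad * K < K * NΩ :=
      lt_of_le_of_lt hbadK (mul_lt_mul_of_pos_right hofflt hNpos)
    rw [mul_comm K NΩ] at h5
    exact lt_of_mul_lt_mul_right h5 (Nat.zero_le K)
  have hne : ((univ : Finset ((Fin n → Bool) × Equiv.Perm (Fin n))) \ bad).Nonempty := by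
    rw [← Finset.card_pos, Finset.card_sdiff_of_subset (Finset.subset_univ bad), Finset.card_univ]
    omega
  obtain ⟨ω, hω⟩ := hne
  have hnot := (Finset.mem_sdiff.1 hω).2
  have hgood : ∀ s t : Fin m → Bool,
      χ' (flipv ω.1 ((Eset n s).image ω.2)) = χ' (flipv ω.1 ((Eset n t).image ω.2))
        → s = t := by
    by_contra hcon
    exact hnot (Finset.mem_filter.2 ⟨Finset.mem_univ _, hcon⟩)
  exact ⟨ω.1, ω.2, hgood⟩

end EdgeRainbowAux

open EdgeRainbowAux in
lemma edge_or_rainbow_cube_aux (m n : ℕ) (hm : 0 < m) (hn : n = 2 * m + 4 ^ m)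
    (α : Type*) (χ : EuclideanSpace ℝ (Fin n) → α) :
    (∃ x ∈ cubeVertices n 1, ∃ y ∈ cubeVertices n 1,
      x ≠ y ∧ dist x y = Real.sqrt 2 ∧ χ x = χ y) ∨
    (∃ f : EuclideanSpace ℝ (Fin m) → EuclideanSpace ℝ (Fin n),
      Set.InjOn f (cubeVertices m (Real.sqrt 2)) ∧
      (∀ x ∈ cubeVertices m (Real.sqrt 2), f x ∈ cubeVertices n 1) ∧
      (∀ x ∈ cubeVertices m (Real.sqrt 2), ∀ y ∈ cubeVertices m (Real.sqrt 2),
        dist (f x) (f y) = dist x y) ∧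
      (∀ x ∈ cubeVertices m (Real.sqrt 2), ∀ y ∈ cubeVertices m (Real.sqrt 2),
        χ (f x) = χ (f y) → x = y)) := by
  classical
  have h4pos : 0 < 4 ^ m := pow_pos (by norm_num) m
  by_cases hmono : ∃ x ∈ cubeVertices n 1, ∃ y ∈ cubeVertices n 1,
      x ≠ y ∧ dist x y = Real.sqrt 2 ∧ χ x = χ y
  · exact Or.inl hmono
  right
  push_neg at hmono
  have h2m : 2 * m ≤ n := by omega
  have P : ∀ a b : Fin n → Bool, #(dset a b) = 2 →
      χ (toEuc a) ≠ χ (toEuc b) := by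
    intro a b hab
    have hnonempty : (dset a b).Nonempty := by
      rw [← Finset.card_pos, hab]; norm_num
    obtain ⟨j, hj⟩ := hnonempty
    have hj' : a j ≠ b j := (Finset.mem_filter.1 hj).2
    have hne : toEuc a ≠ toEuc b := by
      intro h
      have hcf : toEuc a j = toEuc b j := by rw [h]
      cases ha : a j <;> cases hb : b j <;>
        simp [toEuc, ha, hb] at hcf hj'
    have hdist : dist (toEuc a) (toEuc b) = Real.sqrt 2 := by
      rw [dist_toEuc, hab]; norm_num
    exact hmono _ (toEuc_mem a) _ (toEuc_mem b) hne hdist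
  obtain ⟨x, π, hgood⟩ := exists_good hm (by omega) (fun a => χ (toEuc a)) P
  set sB : EuclideanSpace ℝ (Fin m) → Fin m → Bool :=
    fun v i => if v i = 0 then false else true with hsB
  set f : EuclideanSpace ℝ (Fin m) → EuclideanSpace ℝ (Fin n) :=
    fun v => toEuc (flipv x ((Eset n (sB v)).image π)) with hf
  have hs2 : Real.sqrt 2 ≠ 0 := by positivity
  have hcoordne : ∀ v ∈ cubeVertices m (Real.sqrt 2), ∀ w ∈ cubeVertices m (Real.sqrt 2),
      ∀ i, (v i ≠ w i ↔ sB v i ≠ sB w i) := by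
    intro v hv w hw i
    rcases hv i with h1 | h1 <;> rcases hw i with h2 | h2 <;>
      simp [hsB, h1, h2, hs2, Ne.symm hs2]
  have hsrc : ∀ v ∈ cubeVertices m (Real.sqrt 2), ∀ w ∈ cubeVertices m (Real.sqrt 2),
      dist v w = Real.sqrt (2 * #(univ.filter fun i => sB v i ≠ sB w i)) := by
    intro v hv w hw
    rw [EuclideanSpace.dist_eq]
    congr 1
    have hterm : ∀ i, dist (v i) (w i) ^ 2 = if sB v i ≠ sB w i then (2:ℝ) else 0 := by
      intro i
      have hsq : Real.sqrt 2 ^ 2 = 2 := Real.sq_sqrt (by norm_num)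
      rcases hv i with h1 | h1 <;> rcases hw i with h2 | h2 <;>
        simp [hsB, h1, h2, hs2, Real.dist_eq, abs_of_nonneg, Real.sqrt_nonneg, hsq,
          abs_of_nonpos, neg_neg]
    calc (∑ i, dist (v i) (w i) ^ 2)
        = ∑ i, (if sB v i ≠ sB w i then (2:ℝ) else 0) :=
          Finset.sum_congr rfl fun i _ => hterm i
      _ = 2 * #(univ.filter fun i => sB v i ≠ sB w i) := by
          rw [← Finset.sum_filter, Finset.sum_const, nsmul_eq_mul, mul_comm]
  have htgt : ∀ v w : EuclideanSpace ℝ (Fin m),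
      dist (f v) (f w) = Real.sqrt (2 * #(univ.filter fun i => sB v i ≠ sB w i)) := by
    intro v w
    show dist (toEuc (flipv x ((Eset n (sB v)).image π)))
        (toEuc (flipv x ((Eset n (sB w)).image π)))
      = Real.sqrt (2 * #(univ.filter fun i => sB v i ≠ sB w i))
    rw [dist_toEuc, dset_flipv, ← Finset.image_symmDiff _ _ (Equiv.injective _),
      Eset_symmDiff, Finset.card_image_of_injective _ (Equiv.injective _),
      Eset_card hm h2m]
    have hfil : (univ.filter fun i => xor (sB v i) (sB w i) = true)
        = (univ.filter fun i => sB v i ≠ sB w i) := by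
      apply Finset.filter_congr
      intro i _
      cases hsv : sB v i <;> cases hsw : sB w i <;> simp
    rw [hfil]
    push_cast
    ring_nf
  have hiso : ∀ v ∈ cubeVertices m (Real.sqrt 2), ∀ w ∈ cubeVertices m (Real.sqrt 2),
      dist (f v) (f w) = dist v w := by
    intro v hv w hw
    rw [htgt v w, hsrc v hv w hw]
  refine ⟨f, ?_, fun v _ => toEuc_mem _, hiso, ?_⟩
  · intro v hv w hw hfeq
    have : dist v w = 0 := by
      rw [← hiso v hv w hw, hfeq, dist_self]
    exact dist_eq_zero.1 this
  · intro v hv w hw heq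
    have hsbeq : sB v = sB w := hgood (sB v) (sB w) heq
    refine PiLp.ext fun i => ?_
    rcases hv i with h1 | h1 <;> rcases hw i with h2 | h2 <;> rw [h1, h2]
    · have := congrFun hsbeq i
      simp [hsB, h1, h2, hs2] at this
    · have := congrFun hsbeq i
      simp [hsB, h1, h2, hs2] at this

/-- For every positive `m` there exists `n` such that every coloring of the vertex set
`{0,1}ⁿ` of the unit hypercube contains either two distinct same-colored points at
distance `√2`, or a rainbow isometric copy of `{0, √2}^m`. -/
theorem edge_or_rainbow_cube (m : ℕ) (hm : 0 < m) :
    ∃ n : ℕ, 0 < n ∧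
      ∀ (α : Type*) (χ : EuclideanSpace ℝ (Fin n) → α),
        (∃ x ∈ cubeVertices n 1, ∃ y ∈ cubeVertices n 1,
          x ≠ y ∧ dist x y = Real.sqrt 2 ∧ χ x = χ y) ∨
        (∃ f : EuclideanSpace ℝ (Fin m) → EuclideanSpace ℝ (Fin n),
          Set.InjOn f (cubeVertices m (Real.sqrt 2)) ∧
          (∀ x ∈ cubeVertices m (Real.sqrt 2), f x ∈ cubeVertices n 1) ∧
          (∀ x ∈ cubeVertices m (Real.sqrt 2), ∀ y ∈ cubeVertices m (Real.sqrt 2),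
            dist (f x) (f y) = dist x y) ∧
          (∀ x ∈ cubeVertices m (Real.sqrt 2), ∀ y ∈ cubeVertices m (Real.sqrt 2),
            χ (f x) = χ (f y) → x = y)) := by
  have h4pos : 0 < 4 ^ m := pow_pos (by norm_num) m
  exact ⟨2 * m + 4 ^ m, by omega,
    fun α χ => edge_or_rainbow_cube_aux m (2 * m + 4 ^ m) hm rfl α χ⟩
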